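/- arXiv:1302.1217 — 3 statements merged into one kernel-verified Lean document; each statement's English description precedes it below -/
import Mathlib

section
/- For n ≥ 3, the integral over ℝⁿ of (|y|² - 1)/(1+|y|²)^{n+1} dy equals zero. -/
open MeasureTheory Real Filter Set

lemma aux_deriv (m : ℕ) (r : ℝ) :
    HasDerivAt (fun r : ℝ => -(r ^ (m + 1)) / ((m + 1) * (1 + r ^ 2) ^ (m + 1)))
      (r ^ m * ((r ^ 2 - 1) / (1 + r ^ 2) ^ (m + 2))) r := by
  have hpos : (0:ℝ) < 1 + r ^ 2 := by positivity
  have hnum : HasDerivAt (fun r : ℝ => -(r ^ (m + 1))) (-((m + 1) * r ^ m)) r := by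
    simpa using (hasDerivAt_pow (m + 1) r).fun_neg
  have hbase : HasDerivAt (fun r : ℝ => 1 + r ^ 2) (2 * r) r := by
    simpa using ((hasDerivAt_pow 2 r).const_add 1)
  have hden : HasDerivAt (fun r : ℝ => ((m:ℝ) + 1) * (1 + r ^ 2) ^ (m + 1))
      (((m:ℝ) + 1) * ((m + 1) * (1 + r ^ 2) ^ m * (2 * r))) r := by
    have := (hbase.pow (m + 1)).const_mul ((m:ℝ) + 1)
    simpa using this
  have hden_ne : ((m:ℝ) + 1) * (1 + r ^ 2) ^ (m + 1) ≠ 0 := by positivity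
  have h := hnum.fun_div hden hden_ne
  refine h.congr_deriv ?_
  have hb : (1 + r ^ 2) ^ m ≠ 0 := by positivity
  have hm1 : ((m:ℝ) + 1) ≠ 0 := by positivity
  field_simp
  ring

lemma aux_radial (n : ℕ) (hn : 3 ≤ n) :
    ∫ r in Ioi (0:ℝ), r ^ (n - 1) * ((r ^ 2 - 1) / (1 + r ^ 2) ^ (n + 1)) = 0 := by
  obtain ⟨m, rfl⟩ : ∃ m, n = m + 1 := ⟨n - 1, by omega⟩
  simp only [Nat.add_sub_cancel]
  set F : ℝ → ℝ := fun r : ℝ => -(r ^ (m + 1)) / ((m + 1) * (1 + r ^ 2) ^ (m + 1)) with hF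
  have hint : IntegrableOn
      (fun r : ℝ => r ^ m * ((r ^ 2 - 1) / (1 + r ^ 2) ^ (m + 2))) (Ioi 0) := by
    have hmajor : Integrable (fun r : ℝ => (1 + r ^ 2)⁻¹)
        (volume.restrict (Ioi (0:ℝ))) := integrable_inv_one_add_sq.restrict
    refine hmajor.mono ?_ ?_
    · apply Measurable.aestronglyMeasurable
      fun_prop
    · filter_upwards [ae_restrict_mem measurableSet_Ioi] with r hr
      have hr0 : (0:ℝ) < r := hr
      have hpos : (0:ℝ) < 1 + r ^ 2 := by positivity
      rw [Real.norm_eq_abs, Real.norm_eq_abs, abs_of_pos (by positivity : (0:ℝ) < (1 + r^2)⁻¹)]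
      have h1 : |r ^ m * ((r ^ 2 - 1) / (1 + r ^ 2) ^ (m + 2))|
          = r ^ m * |r ^ 2 - 1| / (1 + r ^ 2) ^ (m + 2) := by
        rw [abs_mul, abs_div, abs_of_pos (by positivity : (0:ℝ) < r ^ m),
          abs_of_pos (by positivity : (0:ℝ) < (1 + r^2) ^ (m+2)), mul_div_assoc]
      rw [h1, div_le_iff₀ (by positivity)]
      have h2 : r ^ m ≤ (1 + r ^ 2) ^ m := by
        apply pow_le_pow_left₀ hr0.le
        nlinarith
      have h3 : |r ^ 2 - 1| ≤ 1 + r ^ 2 := by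
        rw [abs_le]; constructor <;> nlinarith
      calc r ^ m * |r ^ 2 - 1| ≤ (1 + r ^ 2) ^ m * (1 + r ^ 2) := by
            apply mul_le_mul h2 h3 (abs_nonneg _) (by positivity)
        _ = (1 + r ^ 2) ^ (m + 1) := by rw [← pow_succ]
        _ = (1 + r ^ 2)⁻¹ * (1 + r ^ 2) ^ (m + 2) := by
            field_simp
            ring
  have htend : Tendsto F atTop (nhds 0) := by
    have h1 : Tendsto (fun r : ℝ => r⁻¹ + r) atTop atTop :=
      Tendsto.zero_eventuallyLE_add_atTop
        ((eventually_gt_atTop (0:ℝ)).mono fun r hr => by positivity) tendsto_id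
    have h2 : Tendsto (fun r : ℝ => (r⁻¹ + r)⁻¹) atTop (nhds 0) := h1.inv_tendsto_atTop
    have h3 : Tendsto (fun r : ℝ => r / (1 + r ^ 2)) atTop (nhds 0) := by
      refine h2.congr' ?_
      filter_upwards [eventually_gt_atTop (0:ℝ)] with r hr
      rw [eq_div_iff (by positivity)]
      field_simp
    have h4 : Tendsto (fun r : ℝ => (r / (1 + r ^ 2)) ^ (m + 1)) atTop (nhds 0) := by
      simpa using h3.pow (m + 1)
    have h5 := h4.const_mul (-(((m:ℝ) + 1)⁻¹))
    rw [mul_zero] at h5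
    refine h5.congr fun r => ?_
    have hb : ((1:ℝ) + r ^ 2) ^ (m + 1) ≠ 0 := by positivity
    have hm1 : ((m:ℝ) + 1) ≠ 0 := by positivity
    simp only [hF, div_pow]
    field_simp
  have h := integral_Ioi_of_hasDerivAt_of_tendsto' (f := F) (a := 0) (m := 0)
    (fun x _ => aux_deriv m x) hint htend
  rw [h, hF]
  norm_num

theorem statement5 (n : ℕ) (hn : 3 ≤ n) :
    ∫ y : EuclideanSpace ℝ (Fin n), (‖y‖ ^ 2 - 1) / (1 + ‖y‖ ^ 2) ^ (n + 1) = 0 := by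
  haveI : NeZero n := ⟨by omega⟩
  have h := MeasureTheory.integral_fun_norm_addHaar
    (volume : Measure (EuclideanSpace ℝ (Fin n)))
    (fun r : ℝ => (r ^ 2 - 1) / (1 + r ^ 2) ^ (n + 1))
  rw [show (fun y : EuclideanSpace ℝ (Fin n) => (‖y‖ ^ 2 - 1) / (1 + ‖y‖ ^ 2) ^ (n + 1))
      = fun y => (fun r : ℝ => (r ^ 2 - 1) / (1 + r ^ 2) ^ (n + 1)) ‖y‖ from rfl] at *
  rw [h, finrank_euclideanSpace_fin]
  rw [show (∫ r in Ioi (0:ℝ), r ^ (n - 1) • ((r ^ 2 - 1) / (1 + r ^ 2) ^ (n + 1)))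
      = ∫ r in Ioi (0:ℝ), r ^ (n - 1) * ((r ^ 2 - 1) / (1 + r ^ 2) ^ (n + 1)) from rfl,
    aux_radial n hn]
  simp
end

section
/- For n ≥ 3 and any s ∈ ℝ and any unit vector ν ∈ ℝⁿ, the integral F(s) = α_n^{p+1} ∫_{ℝⁿ} (1+|y|²)^{-(n+2)/2} |y + sν|^{-(n-2)} dy equals α_n^{p+1} |Bⁿ| (1+s²)^{-(n-2)/2}, where p = (n+2)/(n-2) and |Bⁿ| is the volume of the unit ball in ℝⁿ. -/
open MeasureTheory Real EuclideanGeometry Metric Set Module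

private lemma oneD (n : ℕ) (hn : 3 ≤ n) :
    ∫ y in Ioi (0:ℝ), y ^ (n - 1) • (1 + y ^ 2) ^ (-(((n:ℝ)+2)/2)) = (1 / n : ℝ) := by
  have hn0 : (0:ℝ) < n := by positivity
  set g : ℝ → ℝ := fun r => (1/n) * (r ^ n * (1 + r ^ 2) ^ (-((n:ℝ)/2))) with hg
  have hderiv : ∀ r ∈ Ioi (0:ℝ), HasDerivAt g (r ^ (n - 1) • (1 + r ^ 2) ^ (-(((n:ℝ)+2)/2))) r := by
    intro r hr
    have h1 : (0:ℝ) < 1 + r ^ 2 := by positivity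
    have hp : HasDerivAt (fun r : ℝ => r ^ n) ((n:ℝ) * r ^ (n-1)) r := by
      simpa using hasDerivAt_pow n r
    have hb : HasDerivAt (fun r : ℝ => 1 + r ^ 2) (2 * r) r := by
      simpa [mul_comm] using ((hasDerivAt_pow 2 r).const_add 1)
    have hA : HasDerivAt (fun r : ℝ => (1 + r ^ 2) ^ (-((n:ℝ)/2)))
        ((-((n:ℝ)/2)) * (1 + r ^ 2) ^ (-((n:ℝ)/2) - 1) * (2 * r)) r :=
      by have := (Real.hasDerivAt_rpow_const (x := 1 + r ^ 2) (p := -((n:ℝ)/2)) (Or.inl h1.ne')).comp r hb; exact this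
    have key := (hp.mul hA).const_mul (1/(n:ℝ))
    refine key.congr_deriv ?_
    have e1 : (1 + r ^ 2) ^ (-(((n:ℝ)+2)/2)) = (1 + r ^ 2) ^ (-((n:ℝ)/2) - 1) := by
      ring_nf
    have e2 : (1 + r ^ 2) ^ (-((n:ℝ)/2)) = (1 + r ^ 2) ^ (-((n:ℝ)/2) - 1) * (1 + r ^ 2) := by
      rw [← Real.rpow_add_one h1.ne']; ring_nf
    have hrn : r ^ n = r ^ (n - 1) * r := by
      rw [← pow_succ]; congr 1; omega
    rw [smul_eq_mul, e1, e2, hrn]; field_simp; ring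
  have hcont : ContinuousWithinAt g (Ici (0:ℝ)) 0 := by
    apply Continuous.continuousWithinAt
    apply continuous_const.mul
    apply (continuous_pow n).mul
    apply Continuous.rpow_const (by fun_prop)
    intro r; left; positivity
  have hpos : ∀ r ∈ Ioi (0:ℝ), 0 ≤ r ^ (n-1) • (1 + r ^ 2) ^ (-(((n:ℝ)+2)/2)) := by
    intro r hr
    have : (0:ℝ) < r := hr
    have h1 : (0:ℝ) < 1 + r ^ 2 := by positivity
    simp only [smul_eq_mul]
    positivity
  have htend : Filter.Tendsto g Filter.atTop (nhds ((1:ℝ)/n)) := by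
    have key : Filter.Tendsto (fun r : ℝ => (1/(n:ℝ)) * (1/r^2 + 1) ^ (-((n:ℝ)/2)))
        Filter.atTop (nhds ((1:ℝ)/n * 1)) := by
      apply Filter.Tendsto.const_mul
      have h0 : Filter.Tendsto (fun r : ℝ => 1/r^2 + 1) Filter.atTop (nhds (0 + 1)) := by
        apply Filter.Tendsto.add_const
        simpa [one_div] using (tendsto_pow_neg_atTop (n := 2) (by norm_num)).comp
          (Filter.tendsto_id (α := ℝ))
      have := (Real.continuousAt_rpow_const (0+1) (-((n:ℝ)/2)) (by norm_num)).tendsto.comp h0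
      simpa [Function.comp_def] using this
    rw [show (1:ℝ)/n = (1:ℝ)/n * 1 by ring]
    apply key.congr'
    filter_upwards [Filter.eventually_gt_atTop (0:ℝ)] with r hr
    congr 1
    have hr2 : (0:ℝ) < r ^ 2 := by positivity
    have h1 : (0:ℝ) < 1 + r ^ 2 := by positivity
    have e : 1/r^2 + 1 = (1 + r^2)/r^2 := by field_simp
    rw [e, Real.div_rpow h1.le hr2.le]
    have e2 : (r ^ 2 : ℝ) ^ (-((n:ℝ)/2)) = (r ^ n)⁻¹ := by
      rw [← Real.rpow_natCast r 2, ← Real.rpow_mul hr.le, ← Real.rpow_natCast r n,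
        ← Real.rpow_neg hr.le]
      congr 1; ring
    rw [e2, div_eq_mul_inv, inv_inv, mul_comm]
  have := integral_Ioi_of_hasDerivAt_of_nonneg hcont hderiv hpos htend
  rw [this]
  simp [hg, zero_pow (by omega : n ≠ 0)]

private lemma lemK (n : ℕ) (hn : 3 ≤ n) :
    ∫ v : EuclideanSpace ℝ (Fin n), (1 + ‖v‖ ^ 2) ^ (-(((n:ℝ)+2)/2))
    = Real.pi ^ ((n:ℝ)/2) / Real.Gamma ((n:ℝ)/2 + 1) := by
  haveI : Nonempty (Fin n) := ⟨⟨0, by omega⟩⟩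
  have hdim : finrank ℝ (EuclideanSpace ℝ (Fin n)) = n := finrank_euclideanSpace_fin
  have key := MeasureTheory.integral_fun_norm_addHaar
    (volume : Measure (EuclideanSpace ℝ (Fin n)))
    (fun r : ℝ => (1 + r ^ 2) ^ (-(((n:ℝ)+2)/2)))
  rw [hdim, oneD n hn] at key
  rw [key]
  have hvol : (volume (ball (0 : EuclideanSpace ℝ (Fin n)) 1)).toReal
      = Real.pi ^ ((n:ℝ)/2) / Real.Gamma ((n:ℝ)/2 + 1) := by
    rw [EuclideanSpace.volume_ball (ι := Fin n) 0 1]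
    simp only [Fintype.card_fin, ENNReal.ofReal_one, one_pow, one_mul]
    rw [ENNReal.toReal_ofReal (by positivity)]
    congr 1
    rw [← Real.rpow_natCast (Real.sqrt π) n, Real.sqrt_eq_rpow, ← Real.rpow_mul pi_pos.le]
    congr 1; ring
  rw [measureReal_def, hvol]
  rw [nsmul_eq_mul, smul_eq_mul]
  field_simp

private lemma detLem (n : ℕ) (hn : 3 ≤ n) (x z : EuclideanSpace ℝ (Fin n)) (hzx : z ≠ x) :
    |ContinuousLinearMap.det
      ((((1:ℝ) / dist z x) ^ 2) • (Submodule.reflection (ℝ ∙ (z - x))ᗮ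
        : EuclideanSpace ℝ (Fin n) →L[ℝ] EuclideanSpace ℝ (Fin n)))|
    = ‖z - x‖ ^ (-(2*(n:ℝ))) := by
  have hw : z - x ≠ 0 := sub_ne_zero.2 hzx
  have hwn : (0:ℝ) < ‖z - x‖ := norm_pos_iff.2 hw
  rw [ContinuousLinearMap.det, ContinuousLinearMap.coe_smul]
  rw [LinearMap.det_smul]
  have hrefl : LinearMap.det ((Submodule.reflection (ℝ ∙ (z - x))ᗮ
      : EuclideanSpace ℝ (Fin n) →L[ℝ] EuclideanSpace ℝ (Fin n))
      : EuclideanSpace ℝ (Fin n) →ₗ[ℝ] EuclideanSpace ℝ (Fin n)) = -1 := by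
    rw [show ((Submodule.reflection (ℝ ∙ (z - x))ᗮ
      : EuclideanSpace ℝ (Fin n) →L[ℝ] EuclideanSpace ℝ (Fin n))
      : EuclideanSpace ℝ (Fin n) →ₗ[ℝ] EuclideanSpace ℝ (Fin n)) =
      ((Submodule.reflection (ℝ ∙ (z - x))ᗮ).toLinearEquiv : _ →ₗ[ℝ] _) from rfl]
    rw [Submodule.det_reflection, Submodule.orthogonal_orthogonal, finrank_span_singleton hw, pow_one]
  rw [hrefl, finrank_euclideanSpace_fin]
  rw [dist_eq_norm]
  rw [abs_mul, abs_neg, abs_one, mul_one, abs_pow]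
  rw [abs_of_nonneg (by positivity : (0:ℝ) ≤ (1 / ‖z - x‖) ^ 2)]
  rw [← pow_mul, one_div, inv_pow, show (-(2*(n:ℝ))) = -(((2*n : ℕ) : ℝ)) by push_cast; ring,
    Real.rpow_neg hwn.le, Real.rpow_natCast]

private lemma pwLem (n : ℕ) (hn : 3 ≤ n) (x z : EuclideanSpace ℝ (Fin n)) (hzx : z ≠ x) :
    ‖z - x‖ ^ (-(2*(n:ℝ))) *
      ((1 + ‖inversion x 1 z‖ ^ 2) ^ (-(((n:ℝ)+2)/2)) *
        ‖inversion x 1 z - x‖ ^ (-((n:ℝ)-2)))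
    = (1 + ‖x‖ ^ 2) ^ (-(((n:ℝ)+2)/2)) *
        (‖(z - x) + (1 + ‖x‖ ^ 2)⁻¹ • x‖ ^ 2 + ((1 + ‖x‖ ^ 2)⁻¹) ^ 2) ^ (-(((n:ℝ)+2)/2)) := by
  set q : ℝ := ((n:ℝ)+2)/2 with hq
  set w := z - x with hwdef
  have hw : w ≠ 0 := sub_ne_zero.2 hzx
  have ht : (0:ℝ) < ‖w‖ := norm_pos_iff.2 hw
  set t := ‖w‖ with htdef
  set a : ℝ := 1 + ‖x‖ ^ 2 with ha
  have ha0 : (0:ℝ) < a := by positivity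
  set A : ℝ := ‖w + a⁻¹ • x‖ ^ 2 + (a⁻¹) ^ 2 with hA
  have hA0 : (0:ℝ) < A := by positivity
  have hinv : inversion x 1 z = ((1:ℝ) / t) ^ 2 • w + x := by
    simp [EuclideanGeometry.inversion, vsub_eq_sub, vadd_eq_add, dist_eq_norm, htdef, hwdef]
  -- (A) distance to center
  have htne : t ≠ 0 := ht.ne'
  have hdist : ‖inversion x 1 z - x‖ = t⁻¹ := by
    rw [hinv, add_sub_cancel_right, norm_smul]
    simp only [norm_pow, norm_div, norm_one, Real.norm_eq_abs, abs_norm]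
    rw [abs_of_pos ht, show ‖w‖ = t from rfl]
    field_simp
  -- (B) the conformal factor
  have hnum : 1 + ‖inversion x 1 z‖ ^ 2 = a * A / t ^ 2 := by
    have e1 : ‖inversion x 1 z‖ ^ 2 = ‖x‖^2 + 2 * (((1:ℝ)/t)^2 * inner ℝ x w) + ((1/t)^2)^2 * t^2 := by
      rw [hinv, add_comm, norm_add_sq_real, real_inner_smul_right, norm_smul,
        Real.norm_eq_abs, abs_of_nonneg (by positivity : (0:ℝ) ≤ ((1:ℝ)/t)^2),
        show ‖w‖ = t from rfl]
      ring
    have e2 : A = t^2 + 2 * (a⁻¹ * inner ℝ w x) + a⁻¹^2 * ‖x‖^2 + a⁻¹^2 := by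
      rw [hA, norm_add_sq_real, real_inner_smul_right, norm_smul]
      simp only [Real.norm_eq_abs, abs_of_nonneg (by positivity : (0:ℝ) ≤ a⁻¹)]
      ring
    rw [e1, e2, real_inner_comm w x]
    have hane : a ≠ 0 := ha0.ne'
    have htne : t ≠ 0 := ht.ne'
    field_simp
    rw [ha]; ring
  rw [hdist, hnum]
  -- rpow algebra
  have h1 : (a * A / t ^ 2) ^ (-q) = a ^ (-q) * A ^ (-q) * (t ^ 2 : ℝ) ^ q := by
    rw [Real.div_rpow (by positivity) (by positivity), Real.mul_rpow ha0.le hA0.le,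
      Real.rpow_neg (by positivity : (0:ℝ) ≤ t ^ 2), div_eq_mul_inv, inv_inv]
  rw [h1]
  have h2 : ((t ^ 2 : ℝ)) ^ q = t ^ ((n:ℝ) + 2) := by
    rw [← Real.rpow_natCast t 2, ← Real.rpow_mul ht.le, hq]
    congr 1; ring
  have h3 : (t⁻¹ : ℝ) ^ (-((n:ℝ)-2)) = t ^ ((n:ℝ) - 2) := by
    rw [← Real.rpow_neg_one t, ← Real.rpow_mul ht.le]
    congr 1; ring
  rw [h2, h3]
  have h4 : t ^ (-(2*(n:ℝ))) * (t ^ ((n:ℝ)+2) * t ^ ((n:ℝ)-2)) = 1 := by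
    rw [← Real.rpow_add ht, ← Real.rpow_add ht,
      show -(2*(n:ℝ)) + (((n:ℝ)+2) + ((n:ℝ)-2)) = 0 by ring, Real.rpow_zero]
  linear_combination a ^ (-q) * A ^ (-q) * h4

private lemma lemA (n : ℕ) (hn : 3 ≤ n) (x : EuclideanSpace ℝ (Fin n)) :
    ∫ y : EuclideanSpace ℝ (Fin n),
      (1 + ‖y‖ ^ 2) ^ (-(((n:ℝ)+2)/2)) * ‖y - x‖ ^ (-((n:ℝ)-2))
    = (1 + ‖x‖ ^ 2) ^ (-(((n:ℝ)-2)/2)) *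
      ∫ v : EuclideanSpace ℝ (Fin n), (1 + ‖v‖ ^ 2) ^ (-(((n:ℝ)+2)/2)) := by
  haveI : Nonempty (Fin n) := ⟨⟨0, by omega⟩⟩
  set q : ℝ := ((n:ℝ)+2)/2 with hq
  set a : ℝ := 1 + ‖x‖ ^ 2 with ha
  have ha0 : (0:ℝ) < a := by positivity
  set g : EuclideanSpace ℝ (Fin n) → ℝ := fun y => (1 + ‖y‖ ^ 2) ^ (-q) * ‖y - x‖ ^ (-((n:ℝ)-2)) with hg
  set H : EuclideanSpace ℝ (Fin n) → ℝ := fun u => (‖u‖ ^ 2 + (a⁻¹) ^ 2) ^ (-q) with hH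
  set s : Set (EuclideanSpace ℝ (Fin n)) := {x}ᶜ with hsdef
  have hs : MeasurableSet s := (measurableSet_singleton x).compl
  set φ : EuclideanSpace ℝ (Fin n) → EuclideanSpace ℝ (Fin n) := inversion x 1 with hφ
  have hφφ : ∀ z, φ (φ z) = z := fun z => inversion_inversion x one_ne_zero z
  have hmem : ∀ z ∈ s, φ z ∈ s := by
    intro z hz
    simp only [hsdef, mem_compl_iff, mem_singleton_iff] at hz ⊢
    intro h
    apply hz
    rw [← hφφ z, h, hφ, inversion_self]
  have hinj : InjOn φ s := fun u _ v _ h => by rw [← hφφ u, h, hφφ]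
  have himage : φ '' s = s := by
    apply Subset.antisymm
    · rintro _ ⟨z, hz, rfl⟩; exact hmem z hz
    · intro z hz; exact ⟨φ z, hmem z hz, hφφ z⟩
  set f' : EuclideanSpace ℝ (Fin n) → (EuclideanSpace ℝ (Fin n) →L[ℝ] EuclideanSpace ℝ (Fin n)) := fun z =>
    (((1:ℝ) / dist z x) ^ 2) • (Submodule.reflection (ℝ ∙ (z - x))ᗮ : EuclideanSpace ℝ (Fin n) →L[ℝ] EuclideanSpace ℝ (Fin n)) with hf'def
  have hf' : ∀ z ∈ s, HasFDerivWithinAt φ (f' z) s z := by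
    intro z hz
    have hzx : z ≠ x := hz
    exact (hasFDerivAt_inversion hzx).hasFDerivWithinAt
  have key := integral_image_eq_integral_abs_det_fderiv_smul volume hs hf' hinj g
  rw [himage] at key
  -- step 1: full integral = integral over s
  have step1 : ∫ y, g y = ∫ y in s, g y := by
    rw [hsdef, MeasureTheory.restrict_compl_singleton]
  -- step 2: pointwise rewrite of RHS of key
  have step2 : ∫ z in s, |(f' z).det| • g (φ z)
      = ∫ z in s, a ^ (-q) * H ((z - x) + a⁻¹ • x) := by
    apply setIntegral_congr_fun hs
    intro z hz
    have hzx : z ≠ x := hz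
    have hd := detLem n hn x z hzx
    have hp := pwLem n hn x z hzx
    rw [← hq] at hp
    simp only [hf'def, hg, hH, hφ, smul_eq_mul, ← ha]
    rw [hd]
    rw [← ha] at hp
    exact hp
  -- step 3: remove restriction, pull constant, translate
  have step3 : ∫ z in s, a ^ (-q) * H ((z - x) + a⁻¹ • x)
      = a ^ (-q) * ∫ u, H u := by
    rw [hsdef, MeasureTheory.restrict_compl_singleton, integral_const_mul]
    congr 1
    have : (fun z : EuclideanSpace ℝ (Fin n) => H ((z - x) + a⁻¹ • x)) = fun z : EuclideanSpace ℝ (Fin n) => H (z + (a⁻¹ • x - x)) := by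
      funext z; congr 1; abel
    rw [this, integral_add_right_eq_self H (a⁻¹ • x - x)]
  -- step 4: scaling
  have step4 : ∫ u, H u = a ^ (2 : ℝ) * ∫ v : EuclideanSpace ℝ (Fin n), (1 + ‖v‖ ^ 2) ^ (-q) := by
    have hS := MeasureTheory.Measure.integral_comp_smul_of_nonneg (μ := volume) (f := H)
      (R := a⁻¹) (hR := by positivity)
    have hL : ∀ v : EuclideanSpace ℝ (Fin n), H (a⁻¹ • v) = ((a⁻¹)^2) ^ (-q) * (1 + ‖v‖ ^ 2) ^ (-q) := by
      intro v
      rw [hH]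
      simp only []
      rw [norm_smul, Real.norm_eq_abs, abs_of_nonneg (by positivity : (0:ℝ) ≤ a⁻¹)]
      rw [mul_pow]
      rw [show (a⁻¹:ℝ)^2 * ‖v‖^2 + (a⁻¹)^2 = (a⁻¹)^2 * (1 + ‖v‖^2) by ring]
      rw [Real.mul_rpow (by positivity) (by positivity)]
    simp only [hL] at hS
    rw [integral_const_mul, finrank_euclideanSpace_fin] at hS
    -- hS : ((a⁻¹)^2)^(-q) * ∫ v, (1+‖v‖^2)^(-q) = (a⁻¹ ^ n)⁻¹ • ∫ u, H u
    rw [smul_eq_mul] at hS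
    have h1 : ((a⁻¹ : ℝ) ^ n)⁻¹ = a ^ (n:ℝ) := by
      rw [inv_pow, inv_inv, Real.rpow_natCast]
    have h2 : ((a⁻¹:ℝ)^2) ^ (-q) = a ^ ((n:ℝ) + 2) := by
      rw [inv_pow, ← Real.rpow_natCast a 2, ← Real.rpow_neg ha0.le, ← Real.rpow_mul ha0.le]
      congr 1
      rw [hq]; push_cast; ring
    rw [h1, h2] at hS
    have hfin : ∫ u, H u = a ^ (-(n:ℝ)) * (a ^ ((n:ℝ)+2) * ∫ v : EuclideanSpace ℝ (Fin n), (1 + ‖v‖ ^ 2) ^ (-q)) := by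
      rw [hS, ← mul_assoc, ← Real.rpow_add ha0,
        show (-(n:ℝ)) + (n:ℝ) = 0 by ring, Real.rpow_zero, one_mul]
    rw [hfin, ← mul_assoc, ← Real.rpow_add ha0,
      show -(n:ℝ) + ((n:ℝ)+2) = (2:ℝ) by ring]
  rw [step1, key, step2, step3, step4, ← mul_assoc, ← Real.rpow_add ha0]
  congr 2
  rw [hq]; ring

theorem statement7 (n : ℕ) (hn : 3 ≤ n) (s : ℝ) (ν : EuclideanSpace ℝ (Fin n))
    (hν : ‖ν‖ = 1) :
    (((n : ℝ) * ((n : ℝ) - 2)) ^ (((n : ℝ) - 2) / 4)) ^ (((n : ℝ) + 2) / ((n : ℝ) - 2) + 1) *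
        ∫ y : EuclideanSpace ℝ (Fin n),
          (1 + ‖y‖ ^ 2) ^ (-(((n : ℝ) + 2) / 2)) * ‖y + s • ν‖ ^ (-((n : ℝ) - 2))
      = (((n : ℝ) * ((n : ℝ) - 2)) ^ (((n : ℝ) - 2) / 4)) ^ (((n : ℝ) + 2) / ((n : ℝ) - 2) + 1) *
          (Real.pi ^ ((n : ℝ) / 2) / Real.Gamma ((n : ℝ) / 2 + 1)) *
          (1 + s ^ 2) ^ (-(((n : ℝ) - 2) / 2)) := by
  have hre : (fun y : EuclideanSpace ℝ (Fin n) =>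
      (1 + ‖y‖ ^ 2) ^ (-(((n : ℝ) + 2) / 2)) * ‖y + s • ν‖ ^ (-((n : ℝ) - 2)))
      = fun y : EuclideanSpace ℝ (Fin n) =>
      (1 + ‖y‖ ^ 2) ^ (-(((n : ℝ) + 2) / 2)) * ‖y - (-(s • ν))‖ ^ (-((n : ℝ) - 2)) := by
    funext y; rw [sub_neg_eq_add]
  rw [hre, lemA n hn (-(s • ν)), lemK n hn]
  have hnorm : ‖(-(s • ν) : EuclideanSpace ℝ (Fin n))‖ ^ 2 = s ^ 2 := by
    rw [norm_neg, norm_smul, hν, mul_one, Real.norm_eq_abs, sq_abs]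
  rw [hnorm]
  ring
end

section
/- For n ≥ 3, the function U(x) = α_n (1+|x|²)^{-(n-2)/2} satisfies the Green representation formula U(x) = (1/(n(n-2)|Bⁿ|)) ∫_{ℝⁿ} U(y)^{(n+2)/(n-2)} |y-x|^{-(n-2)} dy for all x ∈ ℝⁿ. -/
open MeasureTheory Real

open Set ENNReal Filter
open scoped RealInnerProductSpace

section helpers
variable {V : Type*} [NormedAddCommGroup V] [InnerProductSpace ℝ V]
  [FiniteDimensional ℝ V] [MeasurableSpace V] [BorelSpace V]


-- Helper 1: Gamma lintegral
lemma lintegral_rpow_exp_aux {a r : ℝ} (ha : 0 < a) (hr : 0 < r) :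
    ∫⁻ t in Ioi (0:ℝ), ENNReal.ofReal (t ^ (a-1) * Real.exp (-(r*t)))
      = ENNReal.ofReal (r ^ (-a) * Real.Gamma a) := by
  have hint : IntegrableOn (fun t : ℝ => t ^ (a-1) * Real.exp (-(r*t))) (Ioi 0) := by
    have := integrableOn_rpow_mul_exp_neg_mul_rpow (p := 1) (s := a-1) (b := r)
      (by linarith) one_pos hr
    refine this.congr_fun (fun t ht => ?_) measurableSet_Ioi
    simp only [Real.rpow_one]; ring_nf
  have hnn : 0 ≤ᵐ[volume.restrict (Ioi (0:ℝ))] fun t : ℝ => t ^ (a-1) * Real.exp (-(r*t)) := by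
    filter_upwards [ae_restrict_mem measurableSet_Ioi] with t ht
    have : (0:ℝ) < t := ht
    positivity
  rw [← ofReal_integral_eq_lintegral_ofReal hint hnn,
    integral_rpow_mul_exp_neg_mul_Ioi ha hr]
  congr 1
  rw [one_div, ← Real.rpow_neg_one, ← Real.rpow_mul hr.le, neg_one_mul]


lemma cexp_eq_ofReal (b c : ℝ) (w v : V) :
    Complex.exp (-(b:ℂ)*‖v‖^2 + (c:ℂ) * (⟪w, v⟫ : ℝ))
      = ((Real.exp (-b*‖v‖^2 + c * ⟪w, v⟫) : ℝ) : ℂ) := by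
  rw [Complex.ofReal_exp]; push_cast; ring_nf

-- Helper 2: real Gaussian integral with linear term
lemma integral_rexp_gauss {b : ℝ} (hb : 0 < b) (c : ℝ) (w : V) :
    ∫ v : V, Real.exp (-b*‖v‖^2 + c * ⟪w, v⟫)
      = (π/b)^((Module.finrank ℝ V : ℝ)/2) * Real.exp (c^2*‖w‖^2/(4*b)) := by
  have hbc : (0:ℝ) < (b:ℂ).re := by simpa using hb
  have h := GaussianFourier.integral_cexp_neg_mul_sq_norm_add (V := V) hbc (c:ℂ) w
  simp_rw [cexp_eq_ofReal b c w] at h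
  rw [show (∫ (v : V), ((rexp (-b * ‖v‖ ^ 2 + c * ⟪w, v⟫) : ℝ) : ℂ)) = ((∫ (v : V), rexp (-b * ‖v‖ ^ 2 + c * ⟪w, v⟫) : ℝ) : ℂ) from integral_ofReal] at h
  have h2 : ((π:ℂ)/b) ^ ((Module.finrank ℝ V : ℂ) / 2) * Complex.exp ((c:ℂ)^2*(‖w‖:ℂ)^2/(4*(b:ℂ)))
      = (((π/b)^((Module.finrank ℝ V : ℝ)/2) * Real.exp (c^2*‖w‖^2/(4*b)) : ℝ) : ℂ) := by
    rw [Complex.ofReal_mul, Complex.ofReal_cpow (by positivity), Complex.ofReal_exp]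
    push_cast; ring_nf
  rw [h2] at h
  exact_mod_cast h

lemma integrable_rexp_gauss {b : ℝ} (hb : 0 < b) (c : ℝ) (w : V) :
    Integrable (fun v : V => Real.exp (-b*‖v‖^2 + c * ⟪w, v⟫)) := by
  have hbc : (0:ℝ) < (b:ℂ).re := by simpa using hb
  have h := (GaussianFourier.integrable_cexp_neg_mul_sq_norm_add (V := V) hbc (c:ℂ) w).re
  refine h.congr (Filter.Eventually.of_forall fun v => ?_)
  simp only [cexp_eq_ofReal b c w, RCLike.re_to_complex, Complex.ofReal_re]

-- Helper 3: scaling for lintegral on Ioi 0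
lemma lintegral_Ioi_scale {s : ℝ} (hs : 0 < s) (f : ℝ → ℝ≥0∞) (hf : Measurable f) :
    ∫⁻ t in Ioi (0:ℝ), f t = ENNReal.ofReal s * ∫⁻ v in Ioi (0:ℝ), f (s * v) := by
  have hpre : (fun v : ℝ => s * v) ⁻¹' (Ioi 0) = Ioi 0 := by
    ext v; simp [mul_pos_iff, hs, not_lt.2 hs.le, hs.not_gt]
  have hmap : Measure.map (fun v : ℝ => s * v) (volume.restrict (Ioi 0))
      = ENNReal.ofReal s⁻¹ • volume.restrict (Ioi (0:ℝ)) :=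
    calc Measure.map (fun v : ℝ => s * v) (volume.restrict (Ioi 0))
        = Measure.map (fun v : ℝ => s * v)
            (volume.restrict ((fun v : ℝ => s * v) ⁻¹' (Ioi 0))) := by rw [hpre]
      _ = (Measure.map (fun v : ℝ => s * v) volume).restrict (Ioi 0) :=
          (Measure.restrict_map (measurable_const_mul s) measurableSet_Ioi).symm
      _ = ENNReal.ofReal s⁻¹ • volume.restrict (Ioi (0:ℝ)) := by
          rw [Real.map_volume_mul_left hs.ne', abs_of_pos (inv_pos.2 hs),
            Measure.restrict_smul]
  have h := lintegral_map hf (measurable_const_mul s) (μ := volume.restrict (Ioi (0:ℝ)))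
  rw [hmap, lintegral_smul_measure] at h
  rw [← h, smul_eq_mul, ← mul_assoc, ← ENNReal.ofReal_mul hs.le, mul_inv_cancel₀ hs.ne', ENNReal.ofReal_one,
    one_mul]

-- Helper 4: the Beta-type integral
lemma lintegral_beta {a : ℝ} (ha : 0 < a) :
    ∫⁻ w in Ioi (0:ℝ), ENNReal.ofReal (w ^ (a-1) * (1+w) ^ (-(a+1)))
      = ENNReal.ofReal (1/a) := by
  set g : ℝ → ℝ := fun w => (w/(1+w)) ^ a / a with hg
  set g' : ℝ → ℝ := fun w => w ^ (a-1) * (1+w) ^ (-(a+1)) with hg'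
  have hderiv : ∀ w ∈ Ioi (0:ℝ), HasDerivAt g (g' w) w := by
    intro w hw
    have hw0 : (0:ℝ) < w := hw
    have hw1 : (0:ℝ) < 1 + w := by linarith
    have h1 : HasDerivAt (fun w : ℝ => w/(1+w)) ((1+w)^(-(2:ℝ))) w := by
      have := (hasDerivAt_id w).div (by simpa using (hasDerivAt_id w).const_add 1) hw1.ne'
      refine this.congr_deriv (Eq.symm ?_)
      rw [show (-(2:ℝ)) = (-2 : ℤ) by norm_num, Real.rpow_intCast]
      field_simp
      norm_cast
      simp
    have h2 : HasDerivAt (fun w : ℝ => (w/(1+w)) ^ a) ((a * (w/(1+w)) ^ (a-1)) * ((1+w)^(-(2:ℝ)))) w :=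
      (Real.hasDerivAt_rpow_const (Or.inl (by positivity))).comp w h1
    have h3 := h2.div_const a
    refine h3.congr_deriv (Eq.symm ?_)
    rw [Real.div_rpow hw0.le hw1.le]
    simp only [hg']
    rw [Real.rpow_neg hw1.le (a+1), Real.rpow_neg hw1.le 2]
    have e1 : (1+w) ^ (a-1) ≠ 0 := (Real.rpow_pos_of_pos hw1 _).ne'
    have e2 : (1+w) ^ (2:ℝ) ≠ 0 := (Real.rpow_pos_of_pos hw1 _).ne'
    have e3 : (1+w) ^ (a+1) ≠ 0 := (Real.rpow_pos_of_pos hw1 _).ne'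
    field_simp
    rw [← Real.rpow_add hw1,
      show (a-1) + (2:ℝ) = a + 1 by ring]
  have hpos : ∀ w ∈ Ioi (0:ℝ), 0 ≤ g' w := by
    intro w hw
    have hw0 : (0:ℝ) < w := hw
    have hw1 : (0:ℝ) < 1 + w := by linarith
    have : (0:ℝ) ≤ w ^ (a-1) := (Real.rpow_pos_of_pos hw0 _).le
    have : (0:ℝ) ≤ (1+w) ^ (-(a+1)) := (Real.rpow_pos_of_pos hw1 _).le
    simp only [hg']
    positivity
  have hcont : ContinuousWithinAt g (Ici 0) 0 := by
    apply ContinuousWithinAt.div_const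
    apply ContinuousWithinAt.rpow_const _ (Or.inr ha.le)
    exact (continuousAt_id.div (continuous_const.add continuous_id).continuousAt
      (by norm_num)).continuousWithinAt
  have htend : Tendsto g atTop (nhds (1/a)) := by
    have h1 : Tendsto (fun w : ℝ => w/(1+w)) atTop (nhds 1) := by
      have : Tendsto (fun w : ℝ => 1 - (1+w)⁻¹) atTop (nhds (1 - 0)) :=
        tendsto_const_nhds.sub ((tendsto_inv_atTop_zero).comp (tendsto_atTop_add_const_left _ 1 tendsto_id))
      rw [sub_zero] at this
      refine this.congr' ?_
      filter_upwards [eventually_gt_atTop (0:ℝ)] with w hw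
      have hw1 : (0:ℝ) < 1 + w := by linarith
      field_simp
      ring
    have h2 : Tendsto (fun w : ℝ => (w/(1+w)) ^ a) atTop (nhds 1) := by
      have := (Real.continuousAt_rpow_const 1 a (Or.inl one_ne_zero)).tendsto.comp h1
      simpa [Function.comp_def] using this
    simpa [hg, one_div] using h2.div_const a
  have key := integral_Ioi_of_hasDerivAt_of_nonneg hcont hderiv hpos htend
  have hint := integrableOn_Ioi_deriv_of_nonneg hcont hderiv hpos htend
  have hnn : 0 ≤ᵐ[volume.restrict (Ioi (0:ℝ))] g' := by
    filter_upwards [ae_restrict_mem measurableSet_Ioi] with t ht using hpos t ht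
  rw [← ofReal_integral_eq_lintegral_ofReal hint hnn, key]
  simp [hg, Real.zero_rpow ha.ne']

-- measurability helper
lemma meas_pow_exp (b B : ℝ) : Measurable fun t : ℝ => ENNReal.ofReal (t ^ b * Real.exp (-(B*t))) :=
  ((measurable_id.pow_const b).mul ((measurable_const_mul B).neg.exp)).ennreal_ofReal

-- Step A : double Gamma representation of a product of negative powers
lemma stepA {A B b1 b2 : ℝ} (hA : 0 < A) (hB : 0 < B) (hb1 : 0 < b1) (hb2 : 0 < b2) :
    ENNReal.ofReal (A^(-b2) * B^(-b1)) * ENNReal.ofReal (Real.Gamma b2 * Real.Gamma b1)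
      = ∫⁻ s in Ioi (0:ℝ), ∫⁻ t in Ioi (0:ℝ),
          ENNReal.ofReal ((s^(b2-1) * Real.exp (-(A*s))) * (t^(b1-1) * Real.exp (-(B*t)))) := by
  symm
  calc ∫⁻ s in Ioi (0:ℝ), ∫⁻ t in Ioi (0:ℝ),
          ENNReal.ofReal ((s^(b2-1) * Real.exp (-(A*s))) * (t^(b1-1) * Real.exp (-(B*t))))
      = ∫⁻ s in Ioi (0:ℝ), ENNReal.ofReal (s^(b2-1) * Real.exp (-(A*s)))
          * ∫⁻ t in Ioi (0:ℝ), ENNReal.ofReal (t^(b1-1) * Real.exp (-(B*t))) := by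
        refine setLIntegral_congr_fun measurableSet_Ioi (fun s hs => ?_)
        have hs0 : (0:ℝ) < s := hs
        have hnn : 0 ≤ s^(b2-1) * Real.exp (-(A*s)) := by positivity
        rw [← lintegral_const_mul' _ _ ENNReal.ofReal_ne_top]
        congr 1; ext t
        rw [← ENNReal.ofReal_mul hnn]
    _ = (∫⁻ s in Ioi (0:ℝ), ENNReal.ofReal (s^(b2-1) * Real.exp (-(A*s))))
          * ENNReal.ofReal (B ^ (-b1) * Real.Gamma b1) := by
        rw [lintegral_rpow_exp_aux hb1 hB, lintegral_mul_const' _ _ ENNReal.ofReal_ne_top]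
    _ = ENNReal.ofReal (A^(-b2) * Real.Gamma b2) * ENNReal.ofReal (B ^ (-b1) * Real.Gamma b1) := by
        rw [lintegral_rpow_exp_aux hb2 hA]
    _ = ENNReal.ofReal (A^(-b2) * B^(-b1)) * ENNReal.ofReal (Real.Gamma b2 * Real.Gamma b1) := by
        rw [← ENNReal.ofReal_mul (by positivity), ← ENNReal.ofReal_mul (by positivity)]
        congr 1; ring

-- Gaussian lintegral over EuclideanSpace
lemma gauss_lintegral (n : ℕ) (x : EuclideanSpace ℝ (Fin n)) {b : ℝ} (hb : 0 < b) (c : ℝ) :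
    ∫⁻ y : EuclideanSpace ℝ (Fin n), ENNReal.ofReal (Real.exp (-b*‖y‖^2 + c*⟪x, y⟫))
      = ENNReal.ofReal ((π/b)^((n:ℝ)/2) * Real.exp (c^2*‖x‖^2/(4*b))) := by
  rw [← ofReal_integral_eq_lintegral_ofReal (integrable_rexp_gauss hb c x)
    (Filter.Eventually.of_forall fun y => (Real.exp_pos _).le), integral_rexp_gauss hb c x,
    finrank_euclideanSpace_fin]

-- Step B : the inner y-integral
lemma stepB (n : ℕ) (x : EuclideanSpace ℝ (Fin n)) (b1 b2 : ℝ) {s t : ℝ}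
    (hs : 0 < s) (ht : 0 < t) :
    ∫⁻ y : EuclideanSpace ℝ (Fin n),
        ENNReal.ofReal ((s^(b2-1) * Real.exp (-((1+‖y‖^2)*s))) * (t^(b1-1) * Real.exp (-(‖y-x‖^2*t))))
      = ENNReal.ofReal (s^(b2-1) * t^(b1-1) * Real.exp (-s) * (π/(s+t))^((n:ℝ)/2)
          * Real.exp (-(‖x‖^2 * (s*t/(s+t))))) := by
  have hst : (0:ℝ) < s + t := by linarith
  have hC : 0 ≤ s^(b2-1) * t^(b1-1) * Real.exp (-s) * Real.exp (-(t*‖x‖^2)) := by positivity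
  have key : ∀ y : EuclideanSpace ℝ (Fin n),
      (s^(b2-1) * Real.exp (-((1+‖y‖^2)*s))) * (t^(b1-1) * Real.exp (-(‖y-x‖^2*t)))
        = (s^(b2-1) * t^(b1-1) * Real.exp (-s) * Real.exp (-(t*‖x‖^2)))
          * Real.exp (-(s+t)*‖y‖^2 + (2*t)*⟪x, y⟫) := by
    intro y
    have harg : -((1+‖y‖^2)*s) + -(‖y-x‖^2*t)
        = (-s + -(t*‖x‖^2)) + (-(s+t)*‖y‖^2 + (2*t)*⟪x, y⟫) := by
      rw [norm_sub_sq_real, real_inner_comm]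
      ring
    calc (s^(b2-1) * Real.exp (-((1+‖y‖^2)*s))) * (t^(b1-1) * Real.exp (-(‖y-x‖^2*t)))
        = s^(b2-1) * t^(b1-1) * Real.exp (-((1+‖y‖^2)*s) + -(‖y-x‖^2*t)) := by
          rw [Real.exp_add]; ring
      _ = s^(b2-1) * t^(b1-1) * (Real.exp (-s + -(t*‖x‖^2))
            * Real.exp (-(s+t)*‖y‖^2 + (2*t)*⟪x, y⟫)) := by rw [← Real.exp_add, harg]
      _ = _ := by rw [Real.exp_add]; ring
  simp_rw [key, ENNReal.ofReal_mul hC]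
  rw [lintegral_const_mul' _ _ ENNReal.ofReal_ne_top, gauss_lintegral n x hst (2*t),
    ← ENNReal.ofReal_mul hC]
  congr 1
  have harg2 : -(t*‖x‖^2) + (2*t)^2*‖x‖^2/(4*(s+t)) = -(‖x‖^2 * (s*t/(s+t))) := by
    field_simp
    ring
  calc s^(b2-1) * t^(b1-1) * Real.exp (-s) * Real.exp (-(t*‖x‖^2))
        * ((π/(s+t))^((n:ℝ)/2) * Real.exp ((2*t)^2*‖x‖^2/(4*(s+t))))
      = s^(b2-1) * t^(b1-1) * Real.exp (-s) * (π/(s+t))^((n:ℝ)/2)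
        * Real.exp (-(t*‖x‖^2) + (2*t)^2*‖x‖^2/(4*(s+t))) := by rw [Real.exp_add]; ring
    _ = _ := by rw [harg2]

-- Step E : scaled beta integral
lemma stepE {b1 c : ℝ} (hb1 : 0 < b1) (hc : 0 < c) :
    ∫⁻ v in Ioi (0:ℝ), ENNReal.ofReal (v^(b1-1) * (1+c*v)^(-(b1+1)))
      = ENNReal.ofReal (c^(-b1) / b1) := by
  have hmeas : Measurable fun v : ℝ => ENNReal.ofReal (v^(b1-1) * (1+c*v)^(-(b1+1))) :=
    ((measurable_id.pow_const _).mul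
      ((measurable_const.add (measurable_const_mul c)).pow_const _)).ennreal_ofReal
  rw [lintegral_Ioi_scale (inv_pos.2 hc) _ hmeas, ← lintegral_const_mul' _ _ ENNReal.ofReal_ne_top]
  have heq : ∀ᵐ w ∂(volume.restrict (Ioi (0:ℝ))),
      ENNReal.ofReal c⁻¹ * ENNReal.ofReal ((c⁻¹*w)^(b1-1) * (1+c*(c⁻¹*w))^(-(b1+1)))
        = ENNReal.ofReal (c⁻¹ * (c⁻¹)^(b1-1)) * ENNReal.ofReal (w^(b1-1) * (1+w)^(-(b1+1))) := by
    filter_upwards [ae_restrict_mem measurableSet_Ioi] with w hw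
    have hw0 : (0:ℝ) < w := hw
    rw [← ENNReal.ofReal_mul (by positivity), ← ENNReal.ofReal_mul (by positivity)]
    congr 1
    rw [mul_inv_cancel_left₀ hc.ne', Real.mul_rpow (by positivity) hw0.le]
    ring
  rw [lintegral_congr_ae heq, lintegral_const_mul' _ _ ENNReal.ofReal_ne_top,
    lintegral_beta hb1, ← ENNReal.ofReal_mul (by positivity)]
  congr 1
  rw [← Real.rpow_neg_one c, ← Real.rpow_mul hc.le, ← Real.rpow_add hc]
  rw [show (-1) + -1 * (b1-1) = -b1 by ring]
  rw [one_div, div_eq_mul_inv]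

-- Step CD : the (s,t) double integral
lemma stepCD {d X : ℝ} (hd : 3 ≤ d) (hX : 0 ≤ X) :
    ∫⁻ s in Ioi (0:ℝ), ∫⁻ t in Ioi (0:ℝ),
        ENNReal.ofReal (s^((d+2)/2-1) * t^((d-2)/2-1) * Real.exp (-s) * (π/(s+t))^(d/2)
          * Real.exp (-(X * (s*t/(s+t)))))
      = ENNReal.ofReal (π^(d/2) * Real.Gamma (d/2) * ((1+X)^(-((d-2)/2)) / ((d-2)/2))) := by
  set b1 : ℝ := (d-2)/2 with hb1def
  set b2 : ℝ := (d+2)/2 with hb2def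
  have hb1 : 0 < b1 := by rw [hb1def]; linarith
  have hb2 : 0 < b2 := by rw [hb2def]; linarith
  have hX1 : (0:ℝ) < 1 + X := by linarith
  -- the function H after substitution t = s * v
  set H : ℝ → ℝ → ℝ := fun s v =>
    π^(d/2) * (v^(b1-1) * (1+v)^(-(d/2)))
      * (s^(d/2-1) * Real.exp (-((1 + X*(v/(1+v))) * s))) with hHdef
  have hHmeas : Measurable (Function.uncurry fun s v => ENNReal.ofReal (H s v)) := by
    apply Measurable.ennreal_ofReal
    apply Measurable.mul
    · exact measurable_const.mul ((measurable_snd.pow_const _).mul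
        ((measurable_const.add measurable_snd).pow_const _))
    · exact (measurable_fst.pow_const _).mul
        ((((measurable_const.add (measurable_const.mul
          (measurable_snd.div (measurable_const.add measurable_snd)))).mul
          measurable_fst).neg).exp)
  -- Step C : substitution in the inner integral
  have heq1 : ∀ s ∈ Ioi (0:ℝ),
      ∫⁻ t in Ioi (0:ℝ), ENNReal.ofReal (s^(b2-1) * t^(b1-1) * Real.exp (-s) * (π/(s+t))^(d/2)
          * Real.exp (-(X * (s*t/(s+t)))))
        = ∫⁻ v in Ioi (0:ℝ), ENNReal.ofReal (H s v) := by
    intro s hs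
    have hs0 : (0:ℝ) < s := hs
    have hmeasG : Measurable fun t : ℝ => ENNReal.ofReal (s^(b2-1) * t^(b1-1) * Real.exp (-s)
        * (π/(s+t))^(d/2) * Real.exp (-(X * (s*t/(s+t))))) := by
      apply Measurable.ennreal_ofReal
      exact ((((measurable_const.mul (measurable_id.pow_const _)).mul measurable_const).mul
        ((measurable_const.div (measurable_const.add measurable_id)).pow_const _)).mul
        (((measurable_const.mul ((measurable_const_mul s).div
          (measurable_const.add measurable_id))).neg).exp))
    rw [lintegral_Ioi_scale hs0 _ hmeasG, ← lintegral_const_mul' _ _ ENNReal.ofReal_ne_top]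
    refine setLIntegral_congr_fun measurableSet_Ioi (fun v hv => ?_)
    have hv0 : (0:ℝ) < v := hv
    have h1v : (0:ℝ) < 1 + v := by linarith
    rw [← ENNReal.ofReal_mul hs0.le]
    congr 1
    have c1 : s + s*v = s*(1+v) := by ring
    have c2 : s*(s*v)/(s*(1+v)) = s*(v/(1+v)) := by
      field_simp
    have c3 : (s*v)^(b1-1) = s^(b1-1)*v^(b1-1) := Real.mul_rpow hs0.le hv0.le
    have c4 : (π/(s*(1+v)))^(d/2) = π^(d/2) * (s^(d/2))⁻¹ * ((1+v)^(d/2))⁻¹ := by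
      rw [Real.div_rpow pi_pos.le (by positivity), Real.mul_rpow hs0.le h1v.le,
        div_eq_mul_inv, mul_inv, ← mul_assoc]
    have c5 : Real.exp (-((1 + X*(v/(1+v))) * s)) = Real.exp (-s) * Real.exp (-(X*(s*(v/(1+v))))) := by
      rw [← Real.exp_add]; congr 1; ring
    have c6 : (1+v)^(-(d/2)) = ((1+v)^(d/2))⁻¹ := Real.rpow_neg h1v.le _
    have c7 : s^(d/2-1) = s * s^(b2-1) * s^(b1-1) * (s^(d/2))⁻¹ := by
      rw [← Real.rpow_neg hs0.le]
      nth_rewrite 2 [show s = s^(1:ℝ) from (Real.rpow_one s).symm]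
      rw [← Real.rpow_add hs0, ← Real.rpow_add hs0, ← Real.rpow_add hs0]
      congr 1
      rw [hb1def, hb2def]; ring
    rw [hHdef]
    simp only []
    rw [c1, c2, c3, c4, c5, c6, c7]
    ring
  rw [setLIntegral_congr_fun measurableSet_Ioi heq1,
    lintegral_lintegral_swap hHmeas.aemeasurable]
  -- Step D : inner s integral via Gamma
  have heq2 : ∀ v ∈ Ioi (0:ℝ),
      ∫⁻ s in Ioi (0:ℝ), ENNReal.ofReal (H s v)
        = ENNReal.ofReal (π^(d/2) * Real.Gamma (d/2))
            * ENNReal.ofReal (v^(b1-1) * (1+(1+X)*v)^(-(b1+1))) := by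
    intro v hv
    have hv0 : (0:ℝ) < v := hv
    have h1v : (0:ℝ) < 1 + v := by linarith
    have hA : (0:ℝ) < 1 + X*(v/(1+v)) := by positivity
    have hKnn : 0 ≤ π^(d/2) * (v^(b1-1) * (1+v)^(-(d/2))) := by positivity
    have : ∀ s : ℝ, ENNReal.ofReal (H s v)
        = ENNReal.ofReal (π^(d/2) * (v^(b1-1) * (1+v)^(-(d/2))))
          * ENNReal.ofReal (s^(d/2-1) * Real.exp (-((1 + X*(v/(1+v))) * s))) := by
      intro s
      rw [hHdef, ← ENNReal.ofReal_mul hKnn]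
    simp_rw [this]
    rw [lintegral_const_mul' _ _ ENNReal.ofReal_ne_top,
      lintegral_rpow_exp_aux (by linarith : (0:ℝ) < d/2) hA,
      ← ENNReal.ofReal_mul hKnn,
      ← ENNReal.ofReal_mul (mul_nonneg (Real.rpow_nonneg pi_pos.le _)
        (Real.Gamma_pos_of_pos (by linarith : (0:ℝ) < d/2)).le)]
    congr 1
    have e1 : (1+v) * (1 + X*(v/(1+v))) = 1+(1+X)*v := by
      field_simp; ring
    have e2 : (1+v)^(-(d/2)) * (1 + X*(v/(1+v)))^(-(d/2)) = (1+(1+X)*v)^(-(d/2)) := by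
      rw [← Real.mul_rpow h1v.le hA.le, e1]
    have e3 : -(d/2) = -(b1+1) := by rw [hb1def]; ring
    calc π^(d/2) * (v^(b1-1) * (1+v)^(-(d/2))) * ((1 + X*(v/(1+v)))^(-(d/2)) * Real.Gamma (d/2))
        = π^(d/2) * Real.Gamma (d/2) * (v^(b1-1)
            * ((1+v)^(-(d/2)) * (1 + X*(v/(1+v)))^(-(d/2)))) := by ring
      _ = _ := by rw [e2, e3]
  rw [setLIntegral_congr_fun measurableSet_Ioi heq2,
    lintegral_const_mul' _ _ ENNReal.ofReal_ne_top, stepE hb1 hX1,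
    ← ENNReal.ofReal_mul (mul_nonneg (Real.rpow_nonneg pi_pos.le _)
      (Real.Gamma_pos_of_pos (by linarith : (0:ℝ) < d/2)).le)]

-- The core identity
lemma core (n : ℕ) (hn : 3 ≤ n) (x : EuclideanSpace ℝ (Fin n)) :
    ∫⁻ y : EuclideanSpace ℝ (Fin n),
        ENNReal.ofReal ((1+‖y‖^2)^(-(((n:ℝ)+2)/2)) * ‖y-x‖^(-((n:ℝ)-2)))
      = ENNReal.ofReal (π^((n:ℝ)/2) / Real.Gamma ((n:ℝ)/2+1) * (1+‖x‖^2)^(-(((n:ℝ)-2)/2))) := by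
  have hd : (3:ℝ) ≤ (n:ℝ) := by exact_mod_cast hn
  set d : ℝ := (n:ℝ) with hddef
  set b1 : ℝ := (d-2)/2 with hb1def
  set b2 : ℝ := (d+2)/2 with hb2def
  have hb1 : 0 < b1 := by rw [hb1def]; linarith
  have hb2 : 0 < b2 := by rw [hb2def]; linarith
  have hG1 : 0 < Real.Gamma b1 := Real.Gamma_pos_of_pos hb1
  have hG2 : 0 < Real.Gamma b2 := Real.Gamma_pos_of_pos hb2
  have hGd2 : 0 < Real.Gamma (d/2+1) := Real.Gamma_pos_of_pos (by linarith)
  set C : ℝ≥0∞ := ENNReal.ofReal (Real.Gamma b2 * Real.Gamma b1) with hCdef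
  have hC0 : C ≠ 0 := by
    rw [hCdef]
    simp only [ne_eq, ENNReal.ofReal_eq_zero, not_le]
    exact mul_pos hG2 hG1
  have hCtop : C ≠ ∞ := ENNReal.ofReal_ne_top
  set L := ∫⁻ y : EuclideanSpace ℝ (Fin n),
      ENNReal.ofReal ((1+‖y‖^2)^(-b2) * ‖y-x‖^(-(d-2))) with hLdef
  -- the triple-integral function
  set F : EuclideanSpace ℝ (Fin n) → ℝ → ℝ → ℝ≥0∞ := fun y s t =>
    ENNReal.ofReal ((s^(b2-1) * Real.exp (-((1+‖y‖^2)*s))) * (t^(b1-1) * Real.exp (-(‖y-x‖^2*t))))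
    with hFdef
  have hFmeas : Measurable (fun p : (EuclideanSpace ℝ (Fin n) × ℝ) × ℝ => F p.1.1 p.1.2 p.2) := by
    apply Measurable.ennreal_ofReal
    exact ((measurable_fst.snd.pow_const _).mul
        (((measurable_const.add (measurable_fst.fst.norm.pow_const 2)).mul
          measurable_fst.snd).neg.exp)).mul
      ((measurable_snd.pow_const _).mul
        ((((measurable_fst.fst.sub measurable_const).norm.pow_const 2).mul
          measurable_snd).neg.exp))
  -- a.e. pointwise double-Gamma representation
  have hae : ∀ᵐ y : EuclideanSpace ℝ (Fin n), y ≠ x := by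
    haveI : Nonempty (Fin n) := ⟨⟨0, by omega⟩⟩
    haveI : Nontrivial (EuclideanSpace ℝ (Fin n)) := inferInstance
    have h0 : (volume : Measure (EuclideanSpace ℝ (Fin n))) {x} = 0 := measure_singleton x
    rw [ae_iff]
    simpa using h0
  have step1 : L * C = ∫⁻ y : EuclideanSpace ℝ (Fin n), ∫⁻ s in Ioi (0:ℝ), ∫⁻ t in Ioi (0:ℝ),
      F y s t := by
    rw [hLdef, ← lintegral_mul_const' _ _ hCtop]
    refine lintegral_congr_ae ?_
    filter_upwards [hae] with y hy
    have hy2 : (0:ℝ) < ‖y-x‖^2 := by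
      have : y - x ≠ 0 := sub_ne_zero.2 hy
      exact pow_pos (norm_pos_iff.2 this) 2
    have hA : (0:ℝ) < 1+‖y‖^2 := by positivity
    have hnorm : (‖y-x‖^2 : ℝ)^(-b1) = ‖y-x‖^(-(d-2)) := by
      rw [← Real.rpow_natCast ‖y-x‖ 2, ← Real.rpow_mul (norm_nonneg _)]
      congr 1
      rw [hb1def]
      push_cast
      ring
    rw [hCdef, ← hnorm, ← stepA hA hy2 hb1 hb2]
  -- swap y inside
  have step2 : ∫⁻ y : EuclideanSpace ℝ (Fin n), ∫⁻ s in Ioi (0:ℝ), ∫⁻ t in Ioi (0:ℝ), F y s t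
      = ∫⁻ s in Ioi (0:ℝ), ∫⁻ t in Ioi (0:ℝ), ∫⁻ y : EuclideanSpace ℝ (Fin n), F y s t := by
    have m1 : AEMeasurable (Function.uncurry fun y s => ∫⁻ t in Ioi (0:ℝ), F y s t)
        (volume.prod (volume.restrict (Ioi (0:ℝ)))) :=
      (Measurable.lintegral_prod_right' (f := fun p : (EuclideanSpace ℝ (Fin n) × ℝ) × ℝ =>
        F p.1.1 p.1.2 p.2) hFmeas).aemeasurable
    rw [lintegral_lintegral_swap m1]
    refine lintegral_congr fun s => ?_
    have m2 : AEMeasurable (Function.uncurry fun y t => F y s t)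
        (volume.prod (volume.restrict (Ioi (0:ℝ)))) := by
      have : (Function.uncurry fun y t => F y s t)
          = (fun p : (EuclideanSpace ℝ (Fin n) × ℝ) × ℝ => F p.1.1 p.1.2 p.2)
            ∘ (fun p : EuclideanSpace ℝ (Fin n) × ℝ => ((p.1, s), p.2)) := rfl
      rw [this]
      exact (hFmeas.comp ((measurable_fst.prodMk measurable_const).prodMk
        measurable_snd)).aemeasurable
    exact lintegral_lintegral_swap m2
  -- inner Gaussian integral
  have step3 : ∫⁻ s in Ioi (0:ℝ), ∫⁻ t in Ioi (0:ℝ), ∫⁻ y : EuclideanSpace ℝ (Fin n), F y s t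
      = ∫⁻ s in Ioi (0:ℝ), ∫⁻ t in Ioi (0:ℝ),
          ENNReal.ofReal (s^(b2-1) * t^(b1-1) * Real.exp (-s) * (π/(s+t))^(d/2)
            * Real.exp (-(‖x‖^2 * (s*t/(s+t))))) := by
    refine setLIntegral_congr_fun measurableSet_Ioi
      (fun s hs => ?_)
    refine setLIntegral_congr_fun measurableSet_Ioi
      (fun t ht => ?_)
    have h := stepB n x b1 b2 (show (0:ℝ) < s from hs) (show (0:ℝ) < t from ht)
    rw [← hddef] at h
    simpa [hFdef] using h
  have step4 := stepCD (d := d) (X := ‖x‖^2) hd (by positivity)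
  rw [← hb1def, ← hb2def] at step4
  have hreal : π^(d/2)/Real.Gamma (d/2+1) * (1+‖x‖^2)^(-b1)
      = (π^(d/2) * Real.Gamma (d/2) * ((1+‖x‖^2)^(-b1)/b1)) / (Real.Gamma b2 * Real.Gamma b1) := by
    have hg : Real.Gamma (d/2) = b1 * Real.Gamma b1 := by
      rw [show d/2 = b1 + 1 by rw [hb1def]; ring, Real.Gamma_add_one hb1.ne']
    have hg2 : Real.Gamma b2 = Real.Gamma (d/2+1) := by
      rw [hb2def]; congr 1; ring
    rw [hg, hg2]
    field_simp
  calc L = L * C * C⁻¹ := by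
        rw [mul_assoc, ENNReal.mul_inv_cancel hC0 hCtop, mul_one]
    _ = ENNReal.ofReal (π^(d/2) * Real.Gamma (d/2) * ((1+‖x‖^2)^(-b1)/b1)) * C⁻¹ := by
        rw [step1, step2, step3, step4]
    _ = ENNReal.ofReal (π^(d/2)/Real.Gamma (d/2+1) * (1+‖x‖^2)^(-b1)) := by
        rw [hCdef, ← div_eq_mul_inv, ← ENNReal.ofReal_div_of_pos (mul_pos hG2 hG1), ← hreal]

end helpers

/-- The standard bubble `U_{δ,ξ}`. -/
noncomputable def bubble (n : ℕ) (δ : ℝ) (ξ x : EuclideanSpace ℝ (Fin n)) : ℝ :=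
  ((n : ℝ) * ((n : ℝ) - 2)) ^ (((n : ℝ) - 2) / 4) * δ ^ (((n : ℝ) - 2) / 2) /
    (δ ^ 2 + ‖x - ξ‖ ^ 2) ^ (((n : ℝ) - 2) / 2)

theorem statement8 (n : ℕ) (hn : 3 ≤ n) (x : EuclideanSpace ℝ (Fin n)) :
    bubble n 1 0 x
      = (1 / ((n : ℝ) * ((n : ℝ) - 2) *
          (Real.pi ^ ((n : ℝ) / 2) / Real.Gamma ((n : ℝ) / 2 + 1)))) *
        ∫ y : EuclideanSpace ℝ (Fin n),
          bubble n 1 0 y ^ (((n : ℝ) + 2) / ((n : ℝ) - 2)) * ‖y - x‖ ^ (-((n : ℝ) - 2)) := by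
  have hd : (3:ℝ) ≤ (n:ℝ) := by exact_mod_cast hn
  have hd2 : (0:ℝ) < (n:ℝ) - 2 := by linarith
  have hdpos : (0:ℝ) < (n:ℝ) := by linarith
  have hdd : (0:ℝ) < (n:ℝ) * ((n:ℝ)-2) := mul_pos hdpos hd2
  set α : ℝ := ((n:ℝ) * ((n:ℝ)-2)) ^ (((n:ℝ)-2)/4) with hαdef
  have hα0 : 0 < α := Real.rpow_pos_of_pos hdd _
  have hbubble : ∀ z : EuclideanSpace ℝ (Fin n),
      bubble n 1 0 z = α * (1+‖z‖^2)^(-(((n:ℝ)-2)/2)) := by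
    intro z
    simp only [bubble, sub_zero, one_pow, Real.one_rpow, mul_one, ← hαdef]
    rw [Real.rpow_neg (by positivity), div_eq_mul_inv]
  have hpow : ∀ y : EuclideanSpace ℝ (Fin n),
      bubble n 1 0 y ^ (((n:ℝ)+2)/((n:ℝ)-2))
        = ((n:ℝ)*((n:ℝ)-2)) * α * (1+‖y‖^2)^(-(((n:ℝ)+2)/2)) := by
    intro y
    rw [hbubble y, Real.mul_rpow hα0.le (by positivity), hαdef,
      ← Real.rpow_mul hdd.le, ← Real.rpow_mul (by positivity : (0:ℝ) ≤ 1+‖y‖^2),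
      show ((n:ℝ)-2)/4 * (((n:ℝ)+2)/((n:ℝ)-2)) = 1 + ((n:ℝ)-2)/4 by field_simp; ring,
      show -(((n:ℝ)-2)/2) * (((n:ℝ)+2)/((n:ℝ)-2)) = -(((n:ℝ)+2)/2) by field_simp,
      Real.rpow_add hdd, Real.rpow_one]
  have hint : ∀ y : EuclideanSpace ℝ (Fin n),
      bubble n 1 0 y ^ (((n:ℝ)+2)/((n:ℝ)-2)) * ‖y-x‖ ^ (-((n:ℝ)-2))
        = ((n:ℝ)*((n:ℝ)-2) * α)
            * ((1+‖y‖^2)^(-(((n:ℝ)+2)/2)) * ‖y-x‖^(-((n:ℝ)-2))) := by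
    intro y; rw [hpow y]; ring
  have hg : ∫ y : EuclideanSpace ℝ (Fin n),
        (1+‖y‖^2)^(-(((n:ℝ)+2)/2)) * ‖y-x‖^(-((n:ℝ)-2))
      = π^((n:ℝ)/2)/Real.Gamma ((n:ℝ)/2+1) * (1+‖x‖^2)^(-(((n:ℝ)-2)/2)) := by
    have hmeas : AEStronglyMeasurable (fun y : EuclideanSpace ℝ (Fin n) =>
        (1+‖y‖^2)^(-(((n:ℝ)+2)/2)) * ‖y-x‖^(-((n:ℝ)-2))) volume :=
      (((measurable_const.add (measurable_norm.pow_const 2)).pow_const _).mul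
        (((measurable_id.sub measurable_const).norm).pow_const _)).aestronglyMeasurable
    have hnn : 0 ≤ᵐ[(volume : Measure (EuclideanSpace ℝ (Fin n)))]
        fun y => (1+‖y‖^2)^(-(((n:ℝ)+2)/2)) * ‖y-x‖^(-((n:ℝ)-2)) :=
      Filter.Eventually.of_forall fun y => by positivity
    have hΓ : 0 < Real.Gamma ((n:ℝ)/2+1) := Real.Gamma_pos_of_pos (by linarith)
    rw [integral_eq_lintegral_of_nonneg_ae hnn hmeas, core n hn x, ENNReal.toReal_ofReal]
    exact mul_nonneg (div_nonneg (Real.rpow_nonneg pi_pos.le _) hΓ.le)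
      (Real.rpow_nonneg (by positivity) _)
  simp_rw [hint]
  rw [MeasureTheory.integral_const_mul, hg, hbubble x]
  have hπ : (0:ℝ) < π^((n:ℝ)/2) := Real.rpow_pos_of_pos pi_pos _
  have hΓ : 0 < Real.Gamma ((n:ℝ)/2+1) := Real.Gamma_pos_of_pos (by linarith)
  field_simp
end
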